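/- Let H be a critical, non-circular 3-hypergraph with |V(H)| ≥ 5, and let C be a component of 𝒫(H) of odd order at least 3 (hence a path, with isomorphism φ_C from the path P_{v(C)} onto C). Then for every edge e ∈ E(H) with e ∩ V(C) ≠ ∅ and e \ V(C) ≠ ∅, there exists i ∈ {0,…,(v(C)−1)/2} such that e ∩ V(C) = {φ_C(2i)}. -/

import Mathlib

/-- `M` is a module of the hypergraph with vertex set `verts` and edge set `edges`. -/
def IsModule {α : Type*} [DecidableEq α] (verts : Finset α) (edges : Set (Finset α))
    (M : Finset α) : Prop :=
  M ⊆ verts ∧ ∀ e ∈ edges, (e ∩ M).Nonempty → (e \ M).Nonempty →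
    ∃ m ∈ M, e ∩ M = {m} ∧ ∀ n ∈ M, (e \ {m}) ∪ {n} ∈ edges

/-- `(verts, edges)` is a hypergraph: edges are nonempty subsets of `verts`. -/
def IsHypergraph {α : Type*} (verts : Finset α) (edges : Set (Finset α)) : Prop :=
  ∀ e ∈ edges, e ⊆ verts ∧ e.Nonempty

/-- `(verts, edges)` is a 3-hypergraph: edges are 3-element subsets of `verts`. -/
def Is3Hypergraph {α : Type*} (verts : Finset α) (edges : Set (Finset α)) : Prop :=
  ∀ e ∈ edges, e ⊆ verts ∧ e.card = 3

/-- Edges of the subhypergraph induced by `W`. -/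
def induceEdges {α : Type*} (W : Finset α) (edges : Set (Finset α)) : Set (Finset α) :=
  {e ∈ edges | e ⊆ W}

/-- A hypergraph is prime if it has at least 3 vertices and all its modules are trivial. -/
def IsPrime {α : Type*} [DecidableEq α] (verts : Finset α) (edges : Set (Finset α)) : Prop :=
  3 ≤ verts.card ∧ ∀ M, IsModule verts edges M → M = ∅ ∨ M = verts ∨ ∃ v, M = {v}

/-- A prime hypergraph is critical if removing any vertex destroys primality. -/
def IsCritical {α : Type*} [DecidableEq α] (verts : Finset α) (edges : Set (Finset α)) : Prop :=
  IsPrime verts edges ∧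
    ∀ v ∈ verts, ¬ IsPrime (verts.erase v) (induceEdges (verts.erase v) edges)

/-- Adjacency in the primality graph: `v ≠ w` and `H - {v, w}` is prime. -/
def PrimAdj {α : Type*} [DecidableEq α] (verts : Finset α) (edges : Set (Finset α))
    (v w : α) : Prop :=
  v ≠ w ∧ v ∈ verts ∧ w ∈ verts ∧
    IsPrime (verts \ {v, w}) (induceEdges (verts \ {v, w}) edges)


/-- `(verts, arc)` is a tournament: the arc relation is irreflexive and, on distinct
vertices of `verts`, exactly one of `arc x y`, `arc y x` holds. -/
def IsTournament {α : Type*} (verts : Finset α) (arc : α → α → Prop) : Prop :=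
  (∀ x, ¬ arc x x) ∧ ∀ x ∈ verts, ∀ y ∈ verts, x ≠ y → (arc x y ↔ ¬ arc y x)

/-- `M` is a module of the tournament `(verts, arc)`. -/
def TournMod {α : Type*} (verts : Finset α) (arc : α → α → Prop) (M : Finset α) : Prop :=
  M ⊆ verts ∧ ∀ x ∈ M, ∀ y ∈ M, ∀ v ∈ verts, arc x v → arc v y → v ∈ M

/-- The edge set of the C₃-structure of a tournament: the 3-sets inducing a 3-cycle. -/
def c3Edges {α : Type*} [DecidableEq α] (verts : Finset α) (arc : α → α → Prop) :
    Set (Finset α) :=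
  {e | ∃ x y z, x ∈ verts ∧ y ∈ verts ∧ z ∈ verts ∧
    x ≠ y ∧ y ≠ z ∧ x ≠ z ∧ arc x y ∧ arc y z ∧ arc z x ∧ e = {x, y, z}}

/-- Arc relation of the tournament `T_p` on `{0, …, p-1}`: obtained from the transitive
tournament (arcs `i j` for `i < j`) by reversing all arcs between even and odd vertices. -/
def arcT (i j : ℕ) : Prop :=
  (i < j ∧ i % 2 = j % 2) ∨ (j < i ∧ i % 2 ≠ j % 2)

/-- A 3-hypergraph is circular if its order is odd and it is isomorphic to
`C₃(T_{v(H)})`. -/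
def IsCircular {α : Type*} [DecidableEq α] (verts : Finset α) (edges : Set (Finset α)) : Prop :=
  Odd verts.card ∧ ∃ f : α → ℕ, Set.InjOn f verts ∧
    verts.image f = Finset.range verts.card ∧
    ∀ e : Finset α, e ⊆ verts →
      (e ∈ edges ↔ e.image f ∈ c3Edges (Finset.range verts.card) arcT)

section Aux
variable {α : Type*} [DecidableEq α] (verts : Finset α) (edges : Set (Finset α))

lemma mem_induceEdges {W : Finset α} {e : Finset α} :
    e ∈ induceEdges W edges ↔ e ∈ edges ∧ e ⊆ W := Iff.rfl

/-- restriction of a module of H−v to H−{v,w} -/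
lemma module_restrict (v w : α) (X : Finset α)
    (hX : IsModule (verts.erase v) (induceEdges (verts.erase v) edges) X) :
    IsModule (verts \ {v, w}) (induceEdges (verts \ {v, w}) edges)
      (X ∩ (verts \ {v, w})) := by
  obtain ⟨hXsub, hXmod⟩ := hX
  constructor
  · exact Finset.inter_subset_right
  · intro e he hne1 hne2
    obtain ⟨heE, heW⟩ := he
    have hWsub : verts \ {v, w} ⊆ verts.erase v := by
      intro z hz
      simp only [Finset.mem_sdiff, Finset.mem_insert, Finset.mem_singleton] at hz
      push_neg at hz
      exact Finset.mem_erase.2 ⟨hz.2.1, hz.1⟩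
    have hinter : e ∩ (X ∩ (verts \ {v, w})) = e ∩ X := by
      ext z
      simp only [Finset.mem_inter, Finset.mem_sdiff]
      constructor
      · rintro ⟨hz, hzX, _⟩; exact ⟨hz, hzX⟩
      · rintro ⟨hz, hzX⟩
        have := heW hz
        simp only [Finset.mem_sdiff] at this
        exact ⟨hz, hzX, this⟩
    have hsd : e \ (X ∩ (verts \ {v, w})) = e \ X := by
      ext z
      simp only [Finset.mem_sdiff, Finset.mem_inter]
      constructor
      · rintro ⟨hz, hmem⟩
        refine ⟨hz, fun hzX => hmem ⟨hzX, Finset.mem_sdiff.1 (heW hz)⟩⟩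
      · rintro ⟨hz, hmem⟩
        exact ⟨hz, fun h => hmem h.1⟩
    rw [hinter] at hne1
    rw [hsd] at hne2
    obtain ⟨m, hmX, hmeq, hswap⟩ := hXmod e ⟨heE, (heW.trans hWsub)⟩ hne1 hne2
    have hme : m ∈ e := (Finset.mem_inter.1 (hmeq ▸ Finset.mem_singleton_self m)).1
    have hmW : m ∈ verts \ {v, w} := heW hme
    refine ⟨m, Finset.mem_inter.2 ⟨hmX, hmW⟩, by rw [hinter, hmeq], ?_⟩
    intro n hn
    obtain ⟨hnX, hnW⟩ := Finset.mem_inter.1 hn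
    have := hswap n hnX
    exact ⟨this.1, Finset.union_subset ((Finset.sdiff_subset).trans heW) (by simpa using hnW)⟩

lemma nontrivial_module_of_not_prime (V' : Finset α) (E' : Set (Finset α))
    (h : ¬ IsPrime V' E') (hcard : 3 ≤ V'.card) :
    ∃ X, IsModule V' E' X ∧ X ≠ ∅ ∧ X ≠ V' ∧ ∀ u, X ≠ {u} := by
  rw [IsPrime] at h
  push_neg at h
  obtain ⟨M, h1, h2, h3, h4⟩ := h hcard
  exact ⟨M, h1, h2.ne_empty, h3, h4⟩

end Aux

section Aux2
variable {α : Type*} [DecidableEq α] (verts : Finset α) (edges : Set (Finset α))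

lemma module_classify (v w : α) (hadj : PrimAdj verts edges v w)
    (X : Finset α)
    (hX : IsModule (verts.erase v) (induceEdges (verts.erase v) edges) X)
    (hX0 : X ≠ ∅) (hXfull : X ≠ verts.erase v) (hXsing : ∀ u, X ≠ {u}) :
    (∃ x, x ∈ verts ∧ x ≠ v ∧ x ≠ w ∧ X = {w, x}) ∨ X = verts \ {v, w} := by
  have hP := hadj.2.2.2
  have hX' := module_restrict verts edges v w X hX
  have htriv := hP.2 _ hX'
  have hXsub := hX.1
  rcases htriv with h0 | hfull | ⟨x, hx⟩
  · -- X ⊆ {w}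
    exfalso
    have hsub : X ⊆ {w} := by
      intro z hz
      have hz' := Finset.mem_erase.1 (hXsub hz)
      by_contra hzw
      rw [Finset.mem_singleton] at hzw
      have : z ∈ X ∩ (verts \ {v, w}) := Finset.mem_inter.2 ⟨hz,
        Finset.mem_sdiff.2 ⟨hz'.2, by simp [hz'.1, hzw]⟩⟩
      rw [h0] at this
      exact absurd this (Finset.notMem_empty z)
    rcases Finset.subset_singleton_iff.1 hsub with h | h
    · exact hX0 h
    · exact hXsing w h
  · -- verts \ {v,w} ⊆ X
    have hsub2 : verts \ {v, w} ⊆ X := by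
      intro z hz
      have : z ∈ X ∩ (verts \ {v, w}) := by rw [hfull]; exact hz
      exact (Finset.mem_inter.1 this).1
    by_cases hw : w ∈ X
    · exfalso
      apply hXfull
      apply Finset.Subset.antisymm hXsub
      intro z hz
      have hz' := Finset.mem_erase.1 hz
      by_cases hzw : z = w
      · rwa [hzw]
      · exact hsub2 (Finset.mem_sdiff.2 ⟨hz'.2, by simp [hz'.1, hzw]⟩)
    · right
      apply Finset.Subset.antisymm
      · intro z hz
        have hz' := Finset.mem_erase.1 (hXsub hz)
        refine Finset.mem_sdiff.2 ⟨hz'.2, ?_⟩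
        simp only [Finset.mem_insert, Finset.mem_singleton]
        push_neg
        exact ⟨hz'.1, fun hzw => hw (hzw ▸ hz)⟩
      · exact hsub2
  · -- X' = {x}
    have hxX : x ∈ X ∧ x ∈ verts \ {v, w} := by
      have : x ∈ X ∩ (verts \ {v, w}) := by rw [hx]; exact Finset.mem_singleton_self x
      exact Finset.mem_inter.1 this
    have hxv : x ∈ verts ∧ x ≠ v ∧ x ≠ w := by
      have := Finset.mem_sdiff.1 hxX.2
      simp only [Finset.mem_insert, Finset.mem_singleton] at this
      push_neg at this
      exact ⟨this.1, this.2.1, this.2.2⟩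
    have hsub3 : X ⊆ {w, x} := by
      intro z hz
      have hz' := Finset.mem_erase.1 (hXsub hz)
      by_cases hzw : z = w
      · simp [hzw]
      · have : z ∈ X ∩ (verts \ {v, w}) := Finset.mem_inter.2 ⟨hz,
          Finset.mem_sdiff.2 ⟨hz'.2, by simp [hz'.1, hzw]⟩⟩
        rw [hx, Finset.mem_singleton] at this
        simp [this]
    by_cases hw : w ∈ X
    · left
      refine ⟨x, hxv.1, hxv.2.1, hxv.2.2, ?_⟩
      apply Finset.Subset.antisymm hsub3
      intro z hz
      rcases Finset.mem_insert.1 hz with h | h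
      · rwa [h]
      · rw [Finset.mem_singleton] at h
        rw [h]; exact hxX.1
    · exfalso
      have hsub4 : X ⊆ {x} := by
        intro z hz
        rcases Finset.mem_insert.1 (hsub3 hz) with h | h
        · exact absurd (h ▸ hz) hw
        · exact h
      rcases Finset.subset_singleton_iff.1 hsub4 with h | h
      · exact hX0 h
      · exact hXsing x h

lemma pair_card_le {a c : α} : ({a, c} : Finset α).card ≤ 2 :=
  (Finset.card_insert_le _ _).trans (by simp)

lemma edge_sdiff_pair_nonempty (h3 : Is3Hypergraph verts edges) {e : Finset α}
    (he : e ∈ edges) (M : Finset α) (hM : M.card ≤ 2) : (e \ M).Nonempty := by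
  rw [Finset.sdiff_nonempty]
  intro hsub
  have := (Finset.card_le_card hsub).trans hM
  rw [(h3 e he).2] at this
  omega

lemma pair_module_ban (h3 : Is3Hypergraph verts edges) (b a c : α) (hac : a ≠ c)
    (hmod : IsModule (verts.erase b) (induceEdges (verts.erase b) edges) {a, c})
    {e : Finset α} (he : e ∈ edges) (ha : a ∈ e) (hce : c ∈ e) (hbe : b ∉ e) : False := by
  have heW : e ⊆ verts.erase b := fun z hz =>
    Finset.mem_erase.2 ⟨fun h => hbe (h ▸ hz), (h3 e he).1 hz⟩
  have hne1 : (e ∩ ({a, c} : Finset α)).Nonempty := ⟨a, Finset.mem_inter.2 ⟨ha, by simp⟩⟩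
  have hne2 := edge_sdiff_pair_nonempty verts edges h3 he {a, c} pair_card_le
  obtain ⟨m, hm, hmeq, _⟩ := hmod.2 e ⟨he, heW⟩ hne1 hne2
  have h1 : a ∈ ({m} : Finset α) := hmeq ▸ Finset.mem_inter.2 ⟨ha, by simp⟩
  have h2 : c ∈ ({m} : Finset α) := hmeq ▸ Finset.mem_inter.2 ⟨hce, by simp⟩
  rw [Finset.mem_singleton] at h1 h2
  exact hac (h1.trans h2.symm)

lemma pair_module_swap (h3 : Is3Hypergraph verts edges) (b a c : α)
    (hmod : IsModule (verts.erase b) (induceEdges (verts.erase b) edges) {a, c})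
    {e : Finset α} (he : e ∈ edges) (ha : a ∈ e) (hce : c ∉ e) (hbe : b ∉ e) :
    (e \ {a}) ∪ {c} ∈ edges := by
  have heW : e ⊆ verts.erase b := fun z hz =>
    Finset.mem_erase.2 ⟨fun h => hbe (h ▸ hz), (h3 e he).1 hz⟩
  have hne1 : (e ∩ ({a, c} : Finset α)).Nonempty := ⟨a, Finset.mem_inter.2 ⟨ha, by simp⟩⟩
  have hne2 := edge_sdiff_pair_nonempty verts edges h3 he {a, c} pair_card_le
  obtain ⟨m, hm, hmeq, hswap⟩ := hmod.2 e ⟨he, heW⟩ hne1 hne2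
  have h1 : a ∈ ({m} : Finset α) := hmeq ▸ Finset.mem_inter.2 ⟨ha, by simp⟩
  rw [Finset.mem_singleton] at h1
  have := hswap c (by simp)
  rw [← h1] at this
  exact this.1

end Aux2

section Aux3
variable {α : Type*} [DecidableEq α] (verts : Finset α) (edges : Set (Finset α))

lemma swap_image_mem (h3 : Is3Hypergraph verts edges) (a b x : α)
    (hmod : IsModule (verts.erase a) (induceEdges (verts.erase a) edges) {b, x})
    {e : Finset α} (he : e ∈ edges) (heW : e ⊆ verts.erase a) :
    e.image (Equiv.swap b x) ∈ edges := by
  have hae : a ∉ e := fun hae => (Finset.mem_erase.1 (heW hae)).1 rfl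
  by_cases hbe : b ∈ e <;> by_cases hxe : x ∈ e
  · -- both in e : image = e
    have him : e.image (Equiv.swap b x) = e := by
      ext z
      simp only [Finset.mem_image]
      constructor
      · rintro ⟨w, hw, rfl⟩
        rcases eq_or_ne w b with rfl | hwb
        · rwa [Equiv.swap_apply_left]
        rcases eq_or_ne w x with rfl | hwx
        · rwa [Equiv.swap_apply_right]
        · rwa [Equiv.swap_apply_of_ne_of_ne hwb hwx]
      · intro hz
        refine ⟨Equiv.swap b x z, ?_, Equiv.swap_apply_self b x z⟩
        rcases eq_or_ne z b with rfl | hzb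
        · rwa [Equiv.swap_apply_left]
        rcases eq_or_ne z x with rfl | hzx
        · rwa [Equiv.swap_apply_right]
        · rwa [Equiv.swap_apply_of_ne_of_ne hzb hzx]
    rw [him]; exact he
  · -- b ∈ e, x ∉ e : image = (e \ {b}) ∪ {x}
    have him : e.image (Equiv.swap b x) = (e \ {b}) ∪ {x} := by
      ext z
      simp only [Finset.mem_image, Finset.mem_union, Finset.mem_sdiff, Finset.mem_singleton]
      constructor
      · rintro ⟨w, hw, rfl⟩
        rcases eq_or_ne w b with rfl | hwb
        · rw [Equiv.swap_apply_left]; right; rfl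
        · have hwx : w ≠ x := fun h => hxe (h ▸ hw)
          rw [Equiv.swap_apply_of_ne_of_ne hwb hwx]
          exact Or.inl ⟨hw, hwb⟩
      · rintro (⟨hz, hzb⟩ | rfl)
        · have hzx : z ≠ x := fun h => hxe (h ▸ hz)
          exact ⟨z, hz, Equiv.swap_apply_of_ne_of_ne hzb hzx⟩
        · exact ⟨b, hbe, by simp⟩
    rw [him]
    exact pair_module_swap verts edges h3 a b x hmod he hbe hxe hae
  · -- x ∈ e, b ∉ e : image = (e \ {x}) ∪ {b}
    have him : e.image (Equiv.swap b x) = (e \ {x}) ∪ {b} := by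
      ext z
      simp only [Finset.mem_image, Finset.mem_union, Finset.mem_sdiff, Finset.mem_singleton]
      constructor
      · rintro ⟨w, hw, rfl⟩
        rcases eq_or_ne w x with rfl | hwx
        · rw [Equiv.swap_apply_right]; right; rfl
        · have hwb : w ≠ b := fun h => hbe (h ▸ hw)
          rw [Equiv.swap_apply_of_ne_of_ne hwb hwx]
          exact Or.inl ⟨hw, hwx⟩
      · rintro (⟨hz, hzx⟩ | rfl)
        · have hzb : z ≠ b := fun h => hbe (h ▸ hz)
          exact ⟨z, hz, Equiv.swap_apply_of_ne_of_ne hzb hzx⟩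
        · exact ⟨x, hxe, by simp⟩
    rw [him]
    have hmod' : IsModule (verts.erase a) (induceEdges (verts.erase a) edges) {x, b} := by
      rwa [Finset.pair_comm]
    exact pair_module_swap verts edges h3 a x b hmod' he hxe hbe hae
  · -- neither
    have him : e.image (Equiv.swap b x) = e := by
      apply Finset.image_congr (g := id) ?_ |>.trans e.image_id
      intro z hz
      exact Equiv.swap_apply_of_ne_of_ne (fun h => hbe (h ▸ hz)) (fun h => hxe (h ▸ hz))
    rw [him]; exact he

lemma prime_transfer (V1 V2 : Finset α) (E : Set (Finset α)) (σ : α → α)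
    (hinv : ∀ z, σ (σ z) = z)
    (h12 : ∀ z ∈ V1, σ z ∈ V2) (h21 : ∀ z ∈ V2, σ z ∈ V1)
    (hE1 : ∀ e ∈ E, e ⊆ V1 → e.image σ ∈ E)
    (hE2 : ∀ e ∈ E, e ⊆ V2 → e.image σ ∈ E)
    (hcard : 3 ≤ V1.card)
    (hp : IsPrime V2 (induceEdges V2 E)) : IsPrime V1 (induceEdges V1 E) := by
  have hinj : Function.Injective σ := Function.Involutive.injective hinv
  have himim : ∀ s : Finset α, (s.image σ).image σ = s := by
    intro s
    rw [Finset.image_image]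
    have : (σ ∘ σ) = id := funext hinv
    rw [this, Finset.image_id]
  have hVim : V2.image σ = V1 := by
    apply Finset.Subset.antisymm
    · intro z hz
      obtain ⟨w, hw, rfl⟩ := Finset.mem_image.1 hz
      exact h21 w hw
    · intro z hz
      exact Finset.mem_image.2 ⟨σ z, h12 z hz, hinv z⟩
  refine ⟨hcard, ?_⟩
  intro M hM
  -- transfer M to a module of V2
  have hMsub : M ⊆ V1 := hM.1
  have hM2 : IsModule V2 (induceEdges V2 E) (M.image σ) := by
    constructor
    · intro z hz
      obtain ⟨w, hw, rfl⟩ := Finset.mem_image.1 hz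
      exact h12 w (hMsub hw)
    · intro e he hne1 hne2
      obtain ⟨heE, heV⟩ := he
      have he' : e.image σ ∈ E := hE2 e heE heV
      have he'V : e.image σ ⊆ V1 := by
        intro z hz
        obtain ⟨w, hw, rfl⟩ := Finset.mem_image.1 hz
        exact h21 w (heV hw)
      have hiM : (e.image σ) ∩ M = (e ∩ M.image σ).image σ := by
        conv_lhs => rw [← himim M]
        rw [Finset.image_inter _ _ hinj]
      have hsM : (e.image σ) \ M = (e \ M.image σ).image σ := by
        conv_lhs => rw [← himim M]
        rw [Finset.image_sdiff _ _ hinj]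
      obtain ⟨m0, hm0, hm0eq, hsw⟩ := hM.2 (e.image σ) ⟨he', he'V⟩
        (by rw [hiM]; exact hne1.image σ) (by rw [hsM]; exact hne2.image σ)
      refine ⟨σ m0, Finset.mem_image_of_mem σ hm0, ?_, ?_⟩
      · rw [hiM] at hm0eq
        have h2 := congrArg (Finset.image σ) hm0eq
        rwa [himim, Finset.image_singleton] at h2
      · intro n hn
        have hn0 : σ n ∈ M := by
          have : σ n ∈ (M.image σ).image σ := Finset.mem_image_of_mem σ hn
          rwa [himim] at this
        have hg := hsw (σ n) hn0
        obtain ⟨hgE, hgV⟩ := hg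
        have hgim : ((e.image σ \ {m0}) ∪ {σ n}).image σ = (e \ {σ m0}) ∪ {n} := by
          rw [Finset.image_union, Finset.image_sdiff _ _ hinj, himim,
            Finset.image_singleton, Finset.image_singleton, hinv]
        constructor
        · have := hE1 _ hgE hgV
          rwa [hgim] at this
        · rw [← hgim]
          intro z hz
          obtain ⟨w, hw, rfl⟩ := Finset.mem_image.1 hz
          exact h12 w (hgV hw)
  rcases hp.2 _ hM2 with h0 | hfull | ⟨u, hu⟩
  · left
    have := congrArg (Finset.image σ) h0
    rwa [himim, Finset.image_empty] at this
  · right; left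
    have := congrArg (Finset.image σ) hfull
    rwa [himim, hVim] at this
  · right; right
    refine ⟨σ u, ?_⟩
    have := congrArg (Finset.image σ) hu
    rwa [himim, Finset.image_singleton] at this

end Aux3

section Aux4
variable {α : Type*} [DecidableEq α] (verts : Finset α) (edges : Set (Finset α))

/-- interior vertex of the path: the two neighbours form a module of H - b -/
lemma interior_module (h5 : 5 ≤ verts.card)
    (hcrit : ∀ v ∈ verts, ¬ IsPrime (verts.erase v) (induceEdges (verts.erase v) edges))
    (a b c : α) (hac : a ≠ c)
    (hadj1 : PrimAdj verts edges b a) (hadj2 : PrimAdj verts edges b c) :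
    IsModule (verts.erase b) (induceEdges (verts.erase b) edges) {a, c} := by
  have hb : b ∈ verts := hadj1.2.1
  have ha : a ∈ verts := hadj1.2.2.1
  have hcv : c ∈ verts := hadj2.2.2.1
  have hba : b ≠ a := hadj1.1
  have hbc : b ≠ c := hadj2.1
  have hcard : 3 ≤ (verts.erase b).card := by
    rw [Finset.card_erase_of_mem hb]; omega
  obtain ⟨X, hX, hX0, hXfull, hXsing⟩ :=
    nontrivial_module_of_not_prime _ _ (hcrit b hb) hcard
  have hcl1 := module_classify verts edges b a hadj1 X hX hX0 hXfull hXsing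
  have hcl2 := module_classify verts edges b c hadj2 X hX hX0 hXfull hXsing
  have hcard2 : ∀ w : α, w ∈ verts → w ≠ b → 3 ≤ (verts \ {b, w}).card := by
    intro w hw hwb
    have hsub : ({b, w} : Finset α) ⊆ verts := by
      intro z hz
      rcases Finset.mem_insert.1 hz with rfl | hz
      · exact hb
      · rw [Finset.mem_singleton] at hz; rw [hz]; exact hw
    rw [Finset.card_sdiff_of_subset hsub, Finset.card_pair (Ne.symm hwb)]
    omega
  rcases hcl1 with ⟨x, hxv, hxb, hxa, hXeq1⟩ | hXeq1
  · rcases hcl2 with ⟨y, hyv, hyb, hyc, hXeq2⟩ | hXeq2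
    · -- {a,x} = {c,y} : c = x, so X = {a,c}
      have hcX : c ∈ X := by rw [hXeq2]; simp
      rw [hXeq1] at hcX
      rcases Finset.mem_insert.1 hcX with h | h
      · exact absurd h.symm hac
      · rw [Finset.mem_singleton] at h
        rw [← h] at hXeq1
        rwa [hXeq1] at hX
    · exfalso
      have h1 : X.card ≤ 2 := hXeq1 ▸ pair_card_le
      have h2 : 3 ≤ X.card := hXeq2 ▸ hcard2 c hcv hbc.symm
      omega
  · rcases hcl2 with ⟨y, hyv, hyb, hyc, hXeq2⟩ | hXeq2
    · exfalso
      have h1 : X.card ≤ 2 := hXeq2 ▸ pair_card_le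
      have h2 : 3 ≤ X.card := hXeq1 ▸ hcard2 a ha hba.symm
      omega
    · exfalso
      have hcin : c ∈ verts \ {b, a} := by
        refine Finset.mem_sdiff.2 ⟨hcv, ?_⟩
        simp only [Finset.mem_insert, Finset.mem_singleton]
        push_neg
        exact ⟨Ne.symm hbc, Ne.symm hac⟩
      rw [← hXeq1, hXeq2] at hcin
      have := (Finset.mem_sdiff.1 hcin).2
      simp at this
end Aux4

section Aux5
variable {α : Type*} [DecidableEq α] (verts : Finset α) (edges : Set (Finset α))

/-- path endpoint: every edge containing the unique neighbour of `a` contains `a`. -/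
lemma endpoint_edge (h3 : Is3Hypergraph verts edges) (h5 : 5 ≤ verts.card)
    (hcrit : ∀ v ∈ verts, ¬ IsPrime (verts.erase v) (induceEdges (verts.erase v) edges))
    (a b : α) (hadj : PrimAdj verts edges a b)
    (huniq : ∀ x, PrimAdj verts edges a x → x = b) :
    ∀ f ∈ edges, b ∈ f → a ∈ f := by
  have ha : a ∈ verts := hadj.2.1
  have hb : b ∈ verts := hadj.2.2.1
  have hab : a ≠ b := hadj.1
  have hcard : 3 ≤ (verts.erase a).card := by
    rw [Finset.card_erase_of_mem ha]; omega
  obtain ⟨X, hX, hX0, hXfull, hXsing⟩ :=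
    nontrivial_module_of_not_prime _ _ (hcrit a ha) hcard
  rcases module_classify verts edges a b hadj X hX hX0 hXfull hXsing with
    ⟨x, hxv, hxa, hxb, hXeq⟩ | hXeq
  · -- X = {b, x} : impossible, since x would be a second neighbour of a
    exfalso
    rw [hXeq] at hX
    set σ := Equiv.swap b x with hσ
    have hsd1 : verts \ {a, x} ⊆ verts.erase a := by
      intro z hz
      have := Finset.mem_sdiff.1 hz
      simp only [Finset.mem_insert, Finset.mem_singleton] at this
      push_neg at this
      exact Finset.mem_erase.2 ⟨this.2.1, this.1⟩
    have hsd2 : verts \ {a, b} ⊆ verts.erase a := by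
      intro z hz
      have := Finset.mem_sdiff.1 hz
      simp only [Finset.mem_insert, Finset.mem_singleton] at this
      push_neg at this
      exact Finset.mem_erase.2 ⟨this.2.1, this.1⟩
    have hprime : IsPrime (verts \ {a, x}) (induceEdges (verts \ {a, x}) edges) := by
      apply prime_transfer (verts \ {a, x}) (verts \ {a, b}) edges σ
      · intro z; exact Equiv.swap_apply_self b x z
      · -- V1 → V2
        intro z hz
        have hz' := Finset.mem_sdiff.1 hz
        simp only [Finset.mem_insert, Finset.mem_singleton] at hz'
        push_neg at hz'
        obtain ⟨hzv, hza, hzx⟩ := hz'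
        refine Finset.mem_sdiff.2 ?_
        rcases eq_or_ne z b with rfl | hzb
        · rw [hσ, Equiv.swap_apply_left]
          refine ⟨hxv, ?_⟩
          simp only [Finset.mem_insert, Finset.mem_singleton]
          push_neg
          exact ⟨hxa, hxb⟩
        · rw [hσ, Equiv.swap_apply_of_ne_of_ne hzb hzx]
          refine ⟨hzv, ?_⟩
          simp only [Finset.mem_insert, Finset.mem_singleton]
          push_neg
          exact ⟨hza, hzb⟩
      · -- V2 → V1
        intro z hz
        have hz' := Finset.mem_sdiff.1 hz
        simp only [Finset.mem_insert, Finset.mem_singleton] at hz'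
        push_neg at hz'
        obtain ⟨hzv, hza, hzb⟩ := hz'
        refine Finset.mem_sdiff.2 ?_
        rcases eq_or_ne z x with rfl | hzx
        · rw [hσ, Equiv.swap_apply_right]
          refine ⟨hb, ?_⟩
          simp only [Finset.mem_insert, Finset.mem_singleton]
          push_neg
          exact ⟨Ne.symm hab, hxb.symm⟩
        · rw [hσ, Equiv.swap_apply_of_ne_of_ne hzb hzx]
          refine ⟨hzv, ?_⟩
          simp only [Finset.mem_insert, Finset.mem_singleton]
          push_neg
          exact ⟨hza, hzx⟩
      · intro e he heV
        exact swap_image_mem verts edges h3 a b x hX he (heV.trans hsd1)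
      · intro e he heV
        exact swap_image_mem verts edges h3 a b x hX he (heV.trans hsd2)
      · have hsub : ({a, x} : Finset α) ⊆ verts := by
          intro z hz
          rcases Finset.mem_insert.1 hz with rfl | hz
          · exact ha
          · rw [Finset.mem_singleton] at hz; rw [hz]; exact hxv
        rw [Finset.card_sdiff_of_subset hsub, Finset.card_pair (Ne.symm hxa)]
        omega
      · exact hadj.2.2.2
    have : PrimAdj verts edges a x := ⟨Ne.symm hxa, ha, hxv, hprime⟩
    exact hxb (huniq x this)
  · -- X = verts \ {a, b} : every edge containing b contains a
    intro f hf hbf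
    by_contra haf
    have hfsub : f ⊆ verts.erase a := fun z hz =>
      Finset.mem_erase.2 ⟨fun h => haf (h ▸ hz), (h3 f hf).1 hz⟩
    have hfX : f ∩ X = f \ {b} := by
      ext z
      simp only [Finset.mem_inter, Finset.mem_sdiff, Finset.mem_singleton, hXeq,
        Finset.mem_insert]
      constructor
      · rintro ⟨hz, _, h2⟩
        push_neg at h2
        exact ⟨hz, h2.2⟩
      · rintro ⟨hz, hzb⟩
        have := Finset.mem_erase.1 (hfsub hz)
        exact ⟨hz, this.2, by push_neg; exact ⟨this.1, hzb⟩⟩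
    have hbX : b ∉ X := by
      rw [hXeq]
      intro h
      have := (Finset.mem_sdiff.1 h).2
      simp at this
    obtain ⟨n, hn, hneq, _⟩ := hX.2 f ⟨hf, hfsub⟩
      (by
        rw [hfX]
        have := edge_sdiff_pair_nonempty verts edges h3 hf {b} (by simp)
        exact this)
      ⟨b, Finset.mem_sdiff.2 ⟨hbf, hbX⟩⟩
    have hcard2 : (f ∩ X).card = 2 := by
      rw [hfX, Finset.card_sdiff_of_subset (by simpa using hbf), (h3 f hf).2, Finset.card_singleton]
    rw [hneq] at hcard2
    simp at hcard2
end Aux5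

theorem odd_path_component_meets_edges_in_even_vertex {α : Type*} [DecidableEq α]
    (verts : Finset α) (edges : Set (Finset α)) (h3 : Is3Hypergraph verts edges)
    (hc : IsCritical verts edges) (h5 : 5 ≤ verts.card)
    (hnc : ¬ IsCircular verts edges)
    (m : ℕ) (φ : ℕ → α) (hinj : Set.InjOn φ (Set.Iio m))
    (hsub : (Finset.range m).image φ ⊆ verts)
    (hpath : ∀ i < m, ∀ j < m, (PrimAdj verts edges (φ i) (φ j) ↔ (j = i + 1 ∨ i = j + 1)))
    (hclosed : ∀ i < m, ∀ w, PrimAdj verts edges (φ i) w → ∃ j < m, w = φ j)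
    (hm3 : 3 ≤ m) (hmodd : Odd m) :
    ∀ e ∈ edges, (e ∩ (Finset.range m).image φ).Nonempty →
      (e \ (Finset.range m).image φ).Nonempty →
      ∃ i, 2 * i < m ∧ e ∩ (Finset.range m).image φ = {φ (2 * i)} := by
  obtain ⟨s, hsm⟩ := hmodd
  have hφv : ∀ i, i < m → φ i ∈ verts := fun i hi =>
    hsub (Finset.mem_image.2 ⟨i, Finset.mem_range.2 hi, rfl⟩)
  have hφD : ∀ i, i < m → φ i ∈ (Finset.range m).image φ := fun i hi =>
    Finset.mem_image.2 ⟨i, Finset.mem_range.2 hi, rfl⟩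
  have hφinj : ∀ i j, i < m → j < m → φ i = φ j → i = j := fun i j hi hj h =>
    hinj (Set.mem_Iio.2 hi) (Set.mem_Iio.2 hj) h
  have hφne : ∀ i j, i < m → j < m → i ≠ j → φ i ≠ φ j := fun i j hi hj hne h =>
    hne (hφinj i j hi hj h)
  have hcrit2 := hc.2
  have hadj : ∀ k, k + 1 < m → PrimAdj verts edges (φ k) (φ (k+1)) := fun k hk =>
    (hpath k (by omega) (k+1) hk).2 (Or.inl rfl)
  have hadj' : ∀ k, k + 1 < m → PrimAdj verts edges (φ (k+1)) (φ k) := fun k hk =>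
    (hpath (k+1) hk k (by omega)).2 (Or.inr rfl)
  have hintmod : ∀ k, k + 2 < m →
      IsModule (verts.erase (φ (k+1))) (induceEdges (verts.erase (φ (k+1))) edges)
        {φ k, φ (k+2)} := by
    intro k hk
    exact interior_module verts edges h5 hcrit2 (φ k) (φ (k+1)) (φ (k+2))
      (hφne k (k+2) (by omega) hk (by omega)) (hadj' k (by omega)) (hadj (k+1) hk)
  have hban : ∀ k, k + 2 < m → ∀ e ∈ edges, φ k ∈ e → φ (k+2) ∈ e → φ (k+1) ∈ e := by
    intro k hk e he h1 h2
    by_contra hmid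
    exact pair_module_ban verts edges h3 (φ (k+1)) (φ k) (φ (k+2))
      (hφne k (k+2) (by omega) hk (by omega)) (hintmod k hk) he h1 h2 hmid
  have hswapup : ∀ k, k + 2 < m → ∀ e ∈ edges, φ k ∈ e → φ (k+1) ∉ e → φ (k+2) ∉ e →
      (e \ {φ k}) ∪ {φ (k+2)} ∈ edges := fun k hk e he h1 h2 h3' =>
    pair_module_swap verts edges h3 (φ (k+1)) (φ k) (φ (k+2)) (hintmod k hk) he h1 h3' h2
  have hswapdown : ∀ k, k + 2 < m → ∀ e ∈ edges, φ (k+2) ∈ e → φ (k+1) ∉ e → φ k ∉ e →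
      (e \ {φ (k+2)}) ∪ {φ k} ∈ edges := by
    intro k hk e he h1 h2 h0
    have hmod' : IsModule (verts.erase (φ (k+1)))
        (induceEdges (verts.erase (φ (k+1))) edges) {φ (k+2), φ k} := by
      rw [Finset.pair_comm]; exact hintmod k hk
    exact pair_module_swap verts edges h3 (φ (k+1)) (φ (k+2)) (φ k) hmod' he h1 h0 h2
  have hE1 : ∀ f ∈ edges, φ 1 ∈ f → φ 0 ∈ f := by
    apply endpoint_edge verts edges h3 h5 hcrit2 (φ 0) (φ 1) (hadj 0 (by omega))
    intro x hx
    obtain ⟨j, hj, rfl⟩ := hclosed 0 (by omega) x hx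
    rcases (hpath 0 (by omega) j hj).1 hx with h | h
    · have : j = 1 := by omega
      rw [this]
    · omega
  have hE2 : ∀ f ∈ edges, φ (m-2) ∈ f → φ (m-1) ∈ f := by
    apply endpoint_edge verts edges h3 h5 hcrit2 (φ (m-1)) (φ (m-2)) ?_ ?_
    · refine (hpath (m-1) (by omega) (m-2) (by omega)).2 (Or.inr (by omega))
    · intro x hx
      obtain ⟨j, hj, rfl⟩ := hclosed (m-1) (by omega) x hx
      rcases (hpath (m-1) (by omega) j hj).1 hx with h | h
      · omega
      · have : j = m - 2 := by omega
        rw [this]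
  -- slide even-gap pairs down
  have hgap : ∀ d p q, q = p + 2 + 2*d → q < m → ∀ e ∈ edges, φ p ∈ e → φ q ∈ e →
      (∀ i, i < m → φ i ∈ e → i = p ∨ i = q) → False := by
    intro d
    induction d with
    | zero =>
      intro p q hq hqm e he hp hqe hout
      have hq' : q = p + 2 := by omega
      subst hq'
      have := hban p (by omega) e he hp hqe
      rcases hout (p+1) (by omega) this with h | h <;> omega
    | succ d ih =>
      intro p q hq hqm e he hp hqe hout
      obtain ⟨k, rfl⟩ : ∃ k, q = k + 2 := ⟨p + 2*d + 2, by omega⟩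
      have hne1 : φ (k+1) ∉ e := fun hmem => by
        rcases hout (k+1) (by omega) hmem with h | h <;> omega
      have hne0 : φ k ∉ e := fun hmem => by
        rcases hout k (by omega) hmem with h | h <;> omega
      have he' := hswapdown k (by omega) e he hqe hne1 hne0
      apply ih p k (by omega) (by omega) _ he'
      · exact Finset.mem_union_left _ (Finset.mem_sdiff.2 ⟨hp,
          Finset.notMem_singleton.2 (hφne p (k+2) (by omega) (by omega) (by omega))⟩)
      · exact Finset.mem_union_right _ (Finset.mem_singleton_self _)
      · intro i him hie
        rcases Finset.mem_union.1 hie with h | h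
        · obtain ⟨hieE, hneq⟩ := Finset.mem_sdiff.1 h
          rcases hout i him hieE with h1 | h1
          · exact Or.inl h1
          · rw [h1] at hneq; simp at hneq
        · exact Or.inr (hφinj i k him (by omega) (Finset.mem_singleton.1 h))
  -- slide odd p down to 1
  have hlow : ∀ t p q, p = 2*t+1 → p < q → q < m → ∀ e ∈ edges, φ p ∈ e → φ q ∈ e →
      (∀ i, i < m → φ i ∈ e → i = p ∨ i = q) → False := by
    intro t
    induction t with
    | zero =>
      intro p q hp1 hpq hqm e he hp hqe hout
      have hp' : p = 1 := by omega
      subst hp'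
      have h0 : φ 0 ∈ e := hE1 e he hp
      rcases hout 0 (by omega) h0 with h | h <;> omega
    | succ t ih =>
      intro p q hp1 hpq hqm e he hp hqe hout
      obtain ⟨k, rfl⟩ : ∃ k, p = k + 2 := ⟨2*t+1, by omega⟩
      have hne1 : φ (k+1) ∉ e := fun hmem => by
        rcases hout (k+1) (by omega) hmem with h | h <;> omega
      have hne0 : φ k ∉ e := fun hmem => by
        rcases hout k (by omega) hmem with h | h <;> omega
      have he' := hswapdown k (by omega) e he hp hne1 hne0
      apply ih k q (by omega) (by omega) hqm _ he'
      · exact Finset.mem_union_right _ (Finset.mem_singleton_self _)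
      · exact Finset.mem_union_left _ (Finset.mem_sdiff.2 ⟨hqe,
          Finset.notMem_singleton.2 (hφne q (k+2) hqm (by omega) (by omega))⟩)
      · intro i him hie
        rcases Finset.mem_union.1 hie with h | h
        · obtain ⟨hieE, hneq⟩ := Finset.mem_sdiff.1 h
          rcases hout i him hieE with h1 | h1
          · rw [h1] at hneq; simp at hneq
          · exact Or.inr h1
        · exact Or.inl (hφinj i k him (by omega) (Finset.mem_singleton.1 h))
  -- slide odd q up to m-2
  have hhigh : ∀ d p q, Odd q → q + 2 + d = m → p < q → ∀ e ∈ edges, φ p ∈ e → φ q ∈ e →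
      (∀ i, i < m → φ i ∈ e → i = p ∨ i = q) → False := by
    intro d
    induction d using Nat.strong_induction_on with
    | _ d ih =>
      intro p q hodd hqm hpq e he hp hqe hout
      obtain ⟨t, ht⟩ := hodd
      by_cases hd0 : d = 0
      · have hq' : q = m - 2 := by omega
        have hm1 : φ (m-1) ∈ e := hE2 e he (by rwa [hq'] at hqe)
        rcases hout (m-1) (by omega) hm1 with h | h <;> omega
      by_cases hd1 : d = 1
      · omega
      · have hne1 : φ (q+1) ∉ e := fun hmem => by
          rcases hout (q+1) (by omega) hmem with h | h <;> omega
        have hne2 : φ (q+2) ∉ e := fun hmem => by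
          rcases hout (q+2) (by omega) hmem with h | h <;> omega
        have he' := hswapup q (by omega) e he hqe hne1 hne2
        apply ih (d-2) (by omega) p (q+2) ⟨t+1, by omega⟩ (by omega) (by omega) _ he'
        · exact Finset.mem_union_left _ (Finset.mem_sdiff.2 ⟨hp,
            Finset.notMem_singleton.2 (hφne p q (by omega) (by omega) (by omega))⟩)
        · exact Finset.mem_union_right _ (Finset.mem_singleton_self _)
        · intro i him hie
          rcases Finset.mem_union.1 hie with h | h
          · obtain ⟨hieE, hneq⟩ := Finset.mem_sdiff.1 h
            rcases hout i him hieE with h1 | h1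
            · exact Or.inl h1
            · rw [h1] at hneq; simp at hneq
          · exact Or.inr (hφinj i (q+2) him (by omega) (Finset.mem_singleton.1 h))
  -- odd singleton impossible
  have hsingle : ∀ t j, j = 2*t+1 → j < m → ∀ e ∈ edges, φ j ∈ e →
      (∀ i, i < m → φ i ∈ e → i = j) → False := by
    intro t
    induction t with
    | zero =>
      intro j hj1 hjm e he hj hout
      have hj' : j = 1 := by omega
      subst hj'
      have h0 : φ 0 ∈ e := hE1 e he hj
      have := hout 0 (by omega) h0
      omega
    | succ t ih =>
      intro j hj1 hjm e he hj hout
      obtain ⟨k, rfl⟩ : ∃ k, j = k + 2 := ⟨2*t+1, by omega⟩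
      have hne1 : φ (k+1) ∉ e := fun hmem => by
        have := hout (k+1) (by omega) hmem; omega
      have hne0 : φ k ∉ e := fun hmem => by
        have := hout k (by omega) hmem; omega
      have he' := hswapdown k (by omega) e he hj hne1 hne0
      apply ih k (by omega) (by omega) _ he'
      · exact Finset.mem_union_right _ (Finset.mem_singleton_self _)
      · intro i him hie
        rcases Finset.mem_union.1 hie with h | h
        · obtain ⟨hieE, hneq⟩ := Finset.mem_sdiff.1 h
          have h1 := hout i him hieE
          rw [h1] at hneq; simp at hneq
        · exact hφinj i k him (by omega) (Finset.mem_singleton.1 h)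
  -- pairs impossible
  have hpair : ∀ p q, p < q → q < m → ∀ e ∈ edges, φ p ∈ e → φ q ∈ e →
      (∀ i, i < m → φ i ∈ e → i = p ∨ i = q) → False := by
    intro p q hpq hqm e he hp hq hout
    rcases Nat.even_or_odd p with ⟨u, hu⟩ | ⟨t, ht⟩
    · rcases Nat.even_or_odd q with ⟨w, hw⟩ | ⟨t, ht⟩
      · exact hgap ((q - p - 2)/2) p q (by omega) hqm e he hp hq hout
      · exact hhigh (m - q - 2) p q ⟨t, ht⟩ (by omega) hpq e he hp hq hout
    · exact hlow t p q ht hpq hqm e he hp hq hout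
  -- main assembly
  intro e he hne1 hne2
  have hcard3 := (h3 e he).2
  have hsum := Finset.card_inter_add_card_sdiff e ((Finset.range m).image φ)
  have hc1 : 1 ≤ (e ∩ (Finset.range m).image φ).card := Finset.card_pos.2 hne1
  have hc2 : 1 ≤ (e \ (Finset.range m).image φ).card := Finset.card_pos.2 hne2
  have hcard12 : (e ∩ (Finset.range m).image φ).card = 1 ∨
      (e ∩ (Finset.range m).image φ).card = 2 := by omega
  rcases hcard12 with h1 | h2
  · obtain ⟨z, hz⟩ := Finset.card_eq_one.1 h1
    have hzmem : z ∈ e ∩ (Finset.range m).image φ := hz ▸ Finset.mem_singleton_self z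
    obtain ⟨hze, hzD⟩ := Finset.mem_inter.1 hzmem
    obtain ⟨j, hjr, hjz⟩ := Finset.mem_image.1 hzD
    rw [Finset.mem_range] at hjr
    rcases Nat.even_or_odd j with ⟨u, hu⟩ | ⟨t, ht⟩
    · refine ⟨u, by omega, ?_⟩
      rw [hz, ← hjz]
      have hju : j = 2*u := by omega
      rw [hju]
    · exfalso
      apply hsingle t j (by omega) hjr e he (hjz ▸ hze)
      intro i him hie
      have : φ i ∈ e ∩ (Finset.range m).image φ :=
        Finset.mem_inter.2 ⟨hie, hφD i him⟩
      rw [hz] at this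
      rw [Finset.mem_singleton] at this
      exact hφinj i j him hjr (this.trans hjz.symm)
  · exfalso
    obtain ⟨z, w, hzw, hzweq⟩ := Finset.card_eq_two.1 h2
    have hzmem : z ∈ e ∩ (Finset.range m).image φ := by rw [hzweq]; simp
    have hwmem : w ∈ e ∩ (Finset.range m).image φ := by rw [hzweq]; simp
    obtain ⟨hze, hzD⟩ := Finset.mem_inter.1 hzmem
    obtain ⟨hwe, hwD⟩ := Finset.mem_inter.1 hwmem
    obtain ⟨p, hpr, hpz⟩ := Finset.mem_image.1 hzD
    obtain ⟨q, hqr, hqw⟩ := Finset.mem_image.1 hwD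
    rw [Finset.mem_range] at hpr hqr
    have hpq : p ≠ q := fun h => hzw (by rw [← hpz, ← hqw, h])
    have hout : ∀ i, i < m → φ i ∈ e → i = p ∨ i = q := by
      intro i him hie
      have : φ i ∈ e ∩ (Finset.range m).image φ :=
        Finset.mem_inter.2 ⟨hie, hφD i him⟩
      rw [hzweq] at this
      rcases Finset.mem_insert.1 this with h | h
      · exact Or.inl (hφinj i p him hpr (h.trans hpz.symm))
      · rw [Finset.mem_singleton] at h
        exact Or.inr (hφinj i q him hqr (h.trans hqw.symm))
    rcases lt_or_gt_of_ne hpq with hlt | hgt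
    · exact hpair p q hlt hqr e he (hpz ▸ hze) (hqw ▸ hwe) hout
    · exact hpair q p hgt hpr e he (hqw ▸ hwe) (hpz ▸ hze)
        (fun i him hie => (hout i him hie).symm)
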